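/- Let l: ℝ^N → ℝ be differentiable with L-Lipschitz gradient, E(x) = ‖x‖₁ - α‖x‖₂ + l(x) with α ≥ 0, and let 0 < λ < 1/L. If x^{k+1} ∈ prox_{λ r_α}(x^k - λ∇l(x^k)) (forward-backward splitting step), then E(x^k) - E(x^{k+1}) ≥ (1/(2λ) - L/2)‖x^{k+1} - x^k‖₂². In particular the sequence E(x^k) is nonincreasing. -/

import Mathlib

open Finset Filter Set
open scoped RealInnerProductSpace

noncomputable def norm1 {N : ℕ} (x : EuclideanSpace ℝ (Fin N)) : ℝ := ∑ i, |x i|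

noncomputable def normInf {N : ℕ} (x : EuclideanSpace ℝ (Fin N)) : ℝ := ⨆ i, |x i|

noncomputable def Fobj {N : ℕ} (a lam : ℝ) (y x : EuclideanSpace ℝ (Fin N)) : ℝ :=
  norm1 x - a * ‖x‖ + 1 / (2 * lam) * ‖x - y‖ ^ 2

/-- Descent lemma for functions with Lipschitz gradient. -/
lemma descent_lemma {N : ℕ} (L : ℝ) (hL : 0 < L)
    (l : EuclideanSpace ℝ (Fin N) → ℝ)
    (g : EuclideanSpace ℝ (Fin N) → EuclideanSpace ℝ (Fin N))
    (hg : ∀ z, HasGradientAt l (g z) z)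
    (hLip : ∀ z w, ‖g z - g w‖ ≤ L * ‖z - w‖)
    (x v : EuclideanSpace ℝ (Fin N)) :
    l (x + v) ≤ l x + ⟪g x, v⟫ + L / 2 * ‖v‖ ^ 2 := by
  set φ : ℝ → ℝ := fun t => l (x + t • v) - t * ⟪g x, v⟫ - L * t ^ 2 / 2 * ‖v‖ ^ 2 with hφ
  have hline : ∀ t : ℝ, HasDerivAt (fun s : ℝ => x + s • v) v t := by
    intro t
    simpa using ((hasDerivAt_id t).smul_const v).const_add x
  have hder : ∀ t : ℝ, HasDerivAt φ
      (⟪g (x + t • v), v⟫ - ⟪g x, v⟫ - L * t * ‖v‖ ^ 2) t := by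
    intro t
    have h1 : HasDerivAt (fun s : ℝ => l (x + s • v)) (⟪g (x + t • v), v⟫) t := by
      have := ((hg (x + t • v)).hasFDerivAt).comp_hasDerivAt t (hline t)
      simp at this
      exact this
    have h2 : HasDerivAt (fun s : ℝ => s * ⟪g x, v⟫) (⟪g x, v⟫) t := by
      simpa using (hasDerivAt_id t).mul_const (⟪g x, v⟫ : ℝ)
    have h3 : HasDerivAt (fun s : ℝ => L * s ^ 2 / 2 * ‖v‖ ^ 2)
        (L * t * ‖v‖ ^ 2) t := by
      have := (((hasDerivAt_pow 2 t).const_mul L).div_const 2).mul_const (‖v‖ ^ 2)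
      convert this using 1
      · rfl
      · rfl
      · push_cast; ring
    have h4 := (h1.sub h2).sub h3
    exact h4
  have hmono : AntitoneOn φ (Set.Icc (0 : ℝ) 1) := by
    apply antitoneOn_of_deriv_nonpos (convex_Icc 0 1)
    · have hdiff : Differentiable ℝ φ := fun t => (hder t).differentiableAt
      exact hdiff.continuous.continuousOn
    · intro t _
      exact (hder t).differentiableAt.differentiableWithinAt
    · intro t ht
      rw [(hder t).deriv]
      have ht0 : 0 ≤ t := (interior_subset ht).1
      have hineq : ⟪g (x + t • v) - g x, v⟫ ≤ ‖g (x + t • v) - g x‖ * ‖v‖ :=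
        real_inner_le_norm _ _
      have hlip : ‖g (x + t • v) - g x‖ ≤ L * (t * ‖v‖) := by
        have := hLip (x + t • v) x
        simpa [norm_smul, abs_of_nonneg ht0, mul_assoc] using this
      have hsub : ⟪g (x + t • v) - g x, v⟫ = ⟪g (x + t • v), v⟫ - ⟪g x, v⟫ :=
        inner_sub_left _ _ _
      nlinarith [norm_nonneg v, mul_le_mul_of_nonneg_right hlip (norm_nonneg v),
        sq_nonneg (‖v‖)]
  have := hmono (Set.left_mem_Icc.mpr zero_le_one) (Set.right_mem_Icc.mpr zero_le_one)
    zero_le_one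
  simp only [hφ, zero_smul, one_smul, add_zero] at this
  nlinarith [this]

theorem stmt8 {N : ℕ} (a lam L : ℝ) (ha : 0 ≤ a) (hL : 0 < L)
    (hlam : 0 < lam) (hlamL : lam < 1 / L)
    (l : EuclideanSpace ℝ (Fin N) → ℝ)
    (g : EuclideanSpace ℝ (Fin N) → EuclideanSpace ℝ (Fin N))
    (hg : ∀ z, HasGradientAt l (g z) z)
    (hLip : ∀ z w, ‖g z - g w‖ ≤ L * ‖z - w‖)
    (xk xk1 : EuclideanSpace ℝ (Fin N))
    (hstep : IsMinOn (Fobj a lam (xk - lam • g xk)) Set.univ xk1) :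
    (norm1 xk - a * ‖xk‖ + l xk) - (norm1 xk1 - a * ‖xk1‖ + l xk1) ≥
      (1 / (2 * lam) - L / 2) * ‖xk1 - xk‖ ^ 2 := by
  set v := xk1 - xk with hv
  have hmin : Fobj a lam (xk - lam • g xk) xk1 ≤ Fobj a lam (xk - lam • g xk) xk :=
    hstep (Set.mem_univ xk)
  have h1 : xk1 - (xk - lam • g xk) = v + lam • g xk := by
    simp [hv]; abel
  have h2 : xk - (xk - lam • g xk) = lam • g xk := by abel
  have hexp : ‖v + lam • g xk‖ ^ 2 =
      ‖v‖ ^ 2 + 2 * (lam * ⟪v, g xk⟫) + lam ^ 2 * ‖g xk‖ ^ 2 := by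
    rw [norm_add_sq_real, real_inner_smul_right, norm_smul]
    rw [Real.norm_eq_abs, abs_of_pos hlam]
    ring
  have h2' : ‖lam • g xk‖ ^ 2 = lam ^ 2 * ‖g xk‖ ^ 2 := by
    rw [norm_smul, Real.norm_eq_abs, abs_of_pos hlam]; ring
  rw [Fobj, Fobj, h1, h2, hexp, h2'] at hmin
  -- descent lemma
  have hdesc : l xk1 ≤ l xk + ⟪g xk, v⟫ + L / 2 * ‖v‖ ^ 2 := by
    have := descent_lemma L hL l g hg hLip xk v
    simpa [hv] using this
  have hsym : ⟪g xk, v⟫ = ⟪v, g xk⟫ := real_inner_comm _ _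
  have hlam2 : (0:ℝ) < 2 * lam := by linarith
  have key : 1 / (2 * lam) * (2 * (lam * ⟪v, g xk⟫)) = ⟪v, g xk⟫ := by
    field_simp
  nlinarith [hmin, hdesc, sq_nonneg ‖v‖]
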